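/- Let U be an M×M unitary matrix with eigenvalues e^{iθ_ℓ}, θ_ℓ ∈ (0, 2π). Then for real θ ∈ (0, 2π) with θ ≠ θ_ℓ for all ℓ, the counting function N(θ) = #{ℓ : θ_ℓ < θ} satisfies N(θ) = Mθ/(2π) − (1/π)·Im log det(1 − U) + (1/π)·Im log det(1 − e^{−iθ}U), where the branches of log det are chosen as Im log det(1 − zU) = ∑_ℓ Im Log(1 − z·e^{iθ_ℓ}) with Log the principal logarithm (for z = 1 interpreted as limit from |z| < 1). -/
import Mathlib


open Complex Matrix Finset Real

lemma im_log_one_sub_exp (x : ℝ) (hx : x ∈ Set.Ioo 0 (2 * π)) :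
    (Complex.log (1 - Complex.exp (x * I))).im = (x - π) / 2 := by
  obtain ⟨hx0, hx2⟩ := hx
  have hs : 0 < Real.sin (x / 2) :=
    Real.sin_pos_of_pos_of_lt_pi (by linarith) (by linarith)
  have h2 : Real.cos ((x - π) / 2) = Real.sin (x / 2) := by
    have h : (x - π) / 2 = x / 2 - π / 2 := by ring
    rw [h, Real.cos_sub_pi_div_two]
  have h3 : Real.sin ((x - π) / 2) = - Real.cos (x / 2) := by
    have h : (x - π) / 2 = x / 2 - π / 2 := by ring
    rw [h, Real.sin_sub_pi_div_two]
  have hc : Real.cos x = 1 - 2 * Real.sin (x / 2) ^ 2 := by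
    have h := Real.cos_sq (x / 2)
    rw [show 2 * (x / 2) = x by ring] at h
    nlinarith [Real.sin_sq_add_cos_sq (x / 2)]
  have hsx : Real.sin x = 2 * Real.sin (x / 2) * Real.cos (x / 2) := by
    have h := Real.sin_two_mul (x / 2)
    rw [show 2 * (x / 2) = x by ring] at h
    linarith
  have h1 : (1 : ℂ) - Complex.exp (x * I)
      = (2 * Real.sin (x / 2) : ℝ) *
        (Real.cos ((x - π) / 2) + Real.sin ((x - π) / 2) * I) := by
    rw [Complex.exp_mul_I, ← Complex.ofReal_cos, ← Complex.ofReal_sin, hc, hsx, h2, h3]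
    push_cast
    ring
  have hπ := Real.pi_pos
  rw [Complex.log_im, h1, Complex.arg_real_mul _ (by positivity), Complex.ofReal_cos,
    Complex.ofReal_sin, Complex.arg_cos_add_sin_mul_I ⟨by linarith, by linarith⟩]

/-- Trace formula for the eigenphase counting function of a unitary matrix `U` with
eigenvalues `e^{iθ_ℓ}`, `θ_ℓ ∈ (0,2π)`: for `θ ∈ (0,2π)` distinct from all `θ_ℓ`,
`N(θ) = Mθ/(2π) - (1/π)·Im log det(1-U) + (1/π)·Im log det(1-e^{-iθ}U)`, where the
branch of `Im log det (1 - zU)` is `∑_ℓ Im Log(1 - z·e^{iθ_ℓ})` with the principal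
logarithm. -/
theorem unitary_counting_trace_formula (M : ℕ)
    (U : Matrix (Fin M) (Fin M) ℂ) (hU : U ∈ Matrix.unitaryGroup (Fin M) ℂ)
    (θl : Fin M → ℝ) (hθl : ∀ ℓ, θl ℓ ∈ Set.Ioo 0 (2 * π))
    (hspec : ∀ z : ℂ,
      ((1 : Matrix (Fin M) (Fin M) ℂ) - z • U).det = ∏ ℓ, (1 - z * exp (θl ℓ * I)))
    (θ : ℝ) (hθ : θ ∈ Set.Ioo 0 (2 * π)) (hne : ∀ ℓ, θ ≠ θl ℓ) :
    ((univ.filter fun ℓ => θl ℓ < θ).card : ℝ) =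
      M * θ / (2 * π)
      - (1 / π) * ∑ ℓ, (Complex.log (1 - exp (θl ℓ * I))).im
      + (1 / π) * ∑ ℓ, (Complex.log (1 - exp (-θ * I) * exp (θl ℓ * I))).im := by
  have hπ := Real.pi_pos
  have hA : ∀ ℓ, (Complex.log (1 - exp (θl ℓ * I))).im = (θl ℓ - π) / 2 := fun ℓ =>
    im_log_one_sub_exp _ (hθl ℓ)
  have hB : ∀ ℓ : Fin M, (Complex.log (1 - exp (-θ * I) * exp (θl ℓ * I))).im
      = (θl ℓ - θ - π) / 2 + (if θl ℓ < θ then π else 0) := by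
    intro ℓ
    have hmul : exp (-θ * I) * exp (θl ℓ * I) = exp ((↑(θl ℓ - θ) : ℝ) * I) := by
      rw [← Complex.exp_add]
      push_cast
      ring_nf
    rw [hmul]
    obtain ⟨hl0, hl2⟩ := hθl ℓ
    obtain ⟨ht0, ht2⟩ := hθ
    by_cases h : θl ℓ < θ
    · have hper : exp ((↑(θl ℓ - θ) : ℝ) * I) = exp ((↑(θl ℓ - θ + 2 * π) : ℝ) * I) := by
        push_cast
        rw [show ((θl ℓ : ℂ) - θ + 2 * π) * I = (↑(θl ℓ) - ↑θ) * I + 2 * ↑π * I from by ring,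
          Complex.exp_add, Complex.exp_two_pi_mul_I, mul_one]
      rw [hper, im_log_one_sub_exp _ ⟨by linarith, by linarith⟩, if_pos h]
      ring
    · have hgt : θ < θl ℓ := lt_of_le_of_ne (not_lt.mp h) (hne ℓ)
      rw [if_neg h, add_zero,
        im_log_one_sub_exp _ ⟨by linarith, by linarith⟩]
  rw [Finset.sum_congr rfl (fun ℓ _ => hA ℓ), Finset.sum_congr rfl (fun ℓ _ => hB ℓ),
    Finset.sum_add_distrib, Finset.sum_ite, Finset.sum_const, Finset.sum_const_zero, add_zero]
  have hsum : ∑ ℓ, ((θl ℓ : ℝ) - θ - π) / 2 = (∑ ℓ, (θl ℓ - π) / 2) - M * θ / 2 := by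
    rw [eq_sub_iff_add_eq,
      show (M : ℝ) * θ / 2 = ∑ _ℓ : Fin M, θ / 2 by simp [Finset.sum_const]; ring,
      ← Finset.sum_add_distrib]
    exact Finset.sum_congr rfl fun ℓ _ => by ring
  rw [hsum, nsmul_eq_mul]
  field_simp
  ring
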